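/- Let I be a compact interval of ℝ and let f : I → ℝ be a C² function that is not constant. If f satisfies the PL condition, i.e. there exists C < ∞ such that f(x) − inf f ≤ C|f'(x)|² for every x ∈ I, then for every x ∈ I the implication holds: f'(x) = 0 implies f''(x) > 0. -/

import Mathlib

open Set Filter Topology

set_option maxHeartbeats 1000000 in
private lemma key_aux (l u : ℝ) (f : ℝ → ℝ)
    (hf : ContDiffOn ℝ 2 f (Icc l u))
    (C : ℝ)
    (hPL : ∀ x ∈ Icc l u,
      f x - sInf (f '' Icc l u) ≤ C * (derivWithin f (Icc l u) x) ^ 2)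
    (x₀ : ℝ) (hx₀ : x₀ ∈ Icc l u) (hd0 : derivWithin f (Icc l u) x₀ = 0)
    (hle : derivWithin (derivWithin f (Icc l u)) (Icc l u) x₀ ≤ 0)
    (w : ℝ) (hw : w ∈ Icc l u) (hxw : x₀ < w)
    (hfw : sInf (f '' Icc l u) < f w) : False := by
  set S := Icc l u with hSdef
  set m := sInf (f '' S) with hmdef
  set f' := derivWithin f S with hf'def
  have hlu : l < u := lt_of_le_of_lt hx₀.1 (lt_of_lt_of_le hxw hw.2)
  have hUD : UniqueDiffOn ℝ S := uniqueDiffOn_Icc hlu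
  have hcf : ContinuousOn f S := hf.continuousOn
  have hf'c : ContDiffOn ℝ 1 f' S := hf.derivWithin hUD (by norm_num)
  have hf'cont : ContinuousOn f' S := hf'c.continuousOn
  have hmle : ∀ x ∈ S, m ≤ f x := fun x hx =>
    csInf_le (isCompact_Icc.image_of_continuousOn hcf).bddBelow (mem_image_of_mem f hx)
  have hfx₀ : f x₀ = m := by
    have h1 := hPL x₀ hx₀
    rw [hd0] at h1
    have h2 := hmle x₀ hx₀
    nlinarith
  have hC : 0 < C := by
    by_contra h
    push_neg at h
    have h1 := hPL w hw
    have h2 : C * (derivWithin f S w) ^ 2 ≤ 0 :=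
      mul_nonpos_of_nonpos_of_nonneg h (sq_nonneg _)
    linarith
  have hsqC : 0 < Real.sqrt C := Real.sqrt_pos.2 hC
  have hderiv_int : ∀ z ∈ Ioo l u, derivWithin f S z = deriv f z := fun z hz =>
    derivWithin_of_mem_nhds (Icc_mem_nhds hz.1 hz.2)
  have hfdiffOn : DifferentiableOn ℝ f S := hf.differentiableOn (by norm_num)
  have hdiffat : ∀ z ∈ Ioo l u, DifferentiableAt ℝ f z := fun z hz =>
    (hfdiffOn z (Ioo_subset_Icc_self hz)).differentiableAt (Icc_mem_nhds hz.1 hz.2)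
  -- interior points where f is locally extremal have zero derivative, hence value m by PL
  have hcrit : ∀ z ∈ Ioo l u, (IsLocalMax f z ∨ IsLocalMin f z) → f' z = 0 := by
    intro z hz hext
    rw [hf'def, hderiv_int z hz]
    rcases hext with h | h
    · exact h.deriv_eq_zero
    · exact h.deriv_eq_zero
  have hsubIcc : Icc x₀ w ⊆ S := Icc_subset_Icc hx₀.1 hw.2
  -- the set of minimizers between x₀ and w
  have hTclosed : IsClosed {z ∈ Icc x₀ w | f z = m} := by
    have he : {z ∈ Icc x₀ w | f z = m} = Icc x₀ w ∩ f ⁻¹' {m} := by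
      ext z; simp [Set.mem_sep_iff]
    rw [he]
    exact (hcf.mono hsubIcc).preimage_isClosed_of_isClosed isClosed_Icc isClosed_singleton
  set y := sSup {z ∈ Icc x₀ w | f z = m} with hydef
  have hyT : y ∈ {z ∈ Icc x₀ w | f z = m} :=
    hTclosed.csSup_mem ⟨x₀, ⟨le_rfl, hxw.le⟩, hfx₀⟩ ⟨w, fun z hz => hz.1.2⟩
  obtain ⟨⟨hx₀y, hyw⟩, hfy⟩ := hyT
  have hyltw : y < w := lt_of_le_of_ne hyw fun h => absurd (h ▸ hfy) (ne_of_gt hfw)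
  have hyS : y ∈ S := ⟨hx₀.1.trans hx₀y, hyw.trans hw.2⟩
  -- between y and w the function is strictly above the min
  have hpos : ∀ z ∈ Ioc y w, m < f z := by
    intro z hz
    have hzS : z ∈ S := ⟨hx₀.1.trans (hx₀y.trans hz.1.le), hz.2.trans hw.2⟩
    rcases lt_or_eq_of_le (hmle z hzS) with h | h
    · exact h
    · exfalso
      have : z ≤ y := le_csSup ⟨w, fun t ht => ht.1.2⟩ ⟨⟨hx₀y.trans hz.1.le, hz.2⟩, h.symm⟩
      exact absurd this (not_le.2 hz.1)
  -- f is identically m on [x₀, y]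
  have hflat : ∀ z ∈ Icc x₀ y, f z = m := by
    by_contra h
    push_neg at h
    obtain ⟨v, hv, hvm⟩ := h
    have hsub2 : Icc x₀ y ⊆ S := Icc_subset_Icc hx₀.1 hyS.2
    have hvgt : m < f v := lt_of_le_of_ne (hmle v (hsub2 hv)) (Ne.symm hvm)
    obtain ⟨c, hc, hcmax⟩ := isCompact_Icc.exists_isMaxOn (nonempty_Icc.2 (hv.1.trans hv.2))
      (hcf.mono hsub2)
    have hfc : m < f c := lt_of_lt_of_le hvgt (hcmax hv)
    have hcx₀ : x₀ < c := lt_of_le_of_ne hc.1 (by rintro rfl; rw [hfx₀] at hfc; exact lt_irrefl m hfc)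
    have hcy : c < y := lt_of_le_of_ne hc.2 (by rintro rfl; rw [hfy] at hfc; exact lt_irrefl m hfc)
    have hint : c ∈ Ioo l u := ⟨hx₀.1.trans_lt hcx₀, (hcy.trans_le hyw).trans_le hw.2⟩
    have hf'c0 : f' c = 0 :=
      hcrit c hint (Or.inl (hcmax.isLocalMax (Icc_mem_nhds hcx₀ hcy)))
    have h1 := hPL c (hsub2 hc)
    rw [hf'c0] at h1
    nlinarith
  -- f' vanishes on [x₀, y]
  have hf'flat : ∀ z ∈ Icc x₀ y, f' z = 0 := by
    intro z hz
    rcases eq_or_lt_of_le hz.1 with h | h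
    · rw [← h]; exact hd0
    · have hint : z ∈ Ioo l u := ⟨hx₀.1.trans_lt h, (hz.2.trans_lt hyltw).trans_le hw.2⟩
      apply hcrit z hint
      right
      have hminOn : IsMinOn f S z := isMinOn_iff.mpr fun t ht => by
        rw [hflat z hz]; exact hmle t ht
      exact hminOn.isLocalMin (Icc_mem_nhds hint.1 hint.2)
  have hf'y : f' y = 0 := hf'flat y ⟨hx₀y, le_rfl⟩
  -- f' is differentiable within S
  have hf'diff : ∀ z ∈ S, HasDerivWithinAt f' (derivWithin f' S z) S z := fun z hz =>
    ((hf'c.differentiableOn one_ne_zero) z hz).hasDerivWithinAt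
  -- the second derivative at y is ≤ 0
  have hAy : derivWithin f' S y ≤ 0 := by
    rcases eq_or_lt_of_le hx₀y with h | h
    · rw [← h]; exact hle
    · have hsub2 : Icc x₀ y ⊆ S := Icc_subset_Icc hx₀.1 hyS.2
      have h1 : HasDerivWithinAt f' (derivWithin f' S y) (Icc x₀ y) y :=
        (hf'diff y hyS).mono hsub2
      have h2 : HasDerivWithinAt (fun _ => (0 : ℝ)) (derivWithin f' S y) (Icc x₀ y) y :=
        h1.congr (fun t ht => (hf'flat t ht).symm) (hf'y).symm
      have hu : UniqueDiffWithinAt ℝ (Icc x₀ y) y := (uniqueDiffOn_Icc h) y ⟨hx₀y, le_rfl⟩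
      have h5 : HasDerivWithinAt (fun _ => (0 : ℝ)) 0 (Icc x₀ y) y :=
        hasDerivWithinAt_const y _ 0
      rw [← h2.derivWithin hu, h5.derivWithin hu]
  -- the square-root function g
  set g : ℝ → ℝ := fun z => Real.sqrt (f z - m) with hgdef
  have hIooS : Ioo y w ⊆ Ioo l u := fun z hz =>
    ⟨hx₀.1.trans_lt (hx₀y.trans_lt hz.1), hz.2.trans_le hw.2⟩
  have hIocS : Ioc y w ⊆ S := fun z hz =>
    ⟨hx₀.1.trans (hx₀y.trans hz.1.le), hz.2.trans hw.2⟩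
  have hgpos : ∀ z ∈ Ioc y w, 0 < g z := fun z hz =>
    Real.sqrt_pos.2 (sub_pos.2 (hpos z hz))
  have hgcont : ContinuousOn g S :=
    Real.continuous_sqrt.comp_continuousOn (hcf.sub continuousOn_const)
  have hgderiv : ∀ z ∈ Ioo y w, HasDerivAt g (1 / (2 * g z) * f' z) z := by
    intro z hz
    have hz' : z ∈ Ioo l u := hIooS hz
    have h1 : HasDerivAt (fun t => f t - m) (f' z) z := by
      have h2 := (hdiffat z hz').hasDerivAt
      rw [hf'def, hderiv_int z hz']
      exact h2.sub_const m
    have h3 : f z - m ≠ 0 := ne_of_gt (sub_pos.2 (hpos z ⟨hz.1, hz.2.le⟩))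
    exact (Real.hasDerivAt_sqrt h3).comp z h1
  have hgderiv_at : ∀ z ∈ Ioo y w, deriv g z = 1 / (2 * g z) * f' z := fun z hz =>
    (hgderiv z hz).deriv
  -- |g'| is bounded below
  have habs : ∀ z ∈ Ioo y w, 1 / (2 * Real.sqrt C) ≤ |deriv g z| := by
    intro z hz
    have hzS : z ∈ S := hIocS ⟨hz.1, hz.2.le⟩
    have hgz : 0 < g z := hgpos z ⟨hz.1, hz.2.le⟩
    have hub : g z ≤ Real.sqrt C * |f' z| := by
      have h1 : f z - m ≤ C * (f' z) ^ 2 := hPL z hzS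
      calc g z = Real.sqrt (f z - m) := rfl
        _ ≤ Real.sqrt (C * (f' z) ^ 2) := Real.sqrt_le_sqrt h1
        _ = Real.sqrt C * |f' z| := by
            rw [Real.sqrt_mul hC.le, Real.sqrt_sq_eq_abs]
    have h2 : |deriv g z| = |f' z| / (2 * g z) := by
      rw [hgderiv_at z hz, abs_mul, abs_of_pos (by positivity : (0:ℝ) < 1 / (2 * g z)),
        one_div_mul_eq_div]
    rw [h2, div_le_div_iff₀ (by positivity) (by positivity)]
    nlinarith
  -- deriv g is continuous on Ioo y w
  have hdgcont : ContinuousOn (deriv g) (Ioo y w) := by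
    apply ContinuousOn.congr _ (fun z hz => hgderiv_at z hz)
    have hsub3 : Ioo y w ⊆ S := fun z hz => hIocS ⟨hz.1, hz.2.le⟩
    apply ContinuousOn.mul _ (hf'cont.mono hsub3)
    exact continuousOn_const.div
      (continuousOn_const.mul (hgcont.mono hsub3))
      (fun z hz => ne_of_gt (by have := hgpos z ⟨hz.1, hz.2.le⟩; positivity))
  -- deriv g is in fact bounded below (positive sign)
  have hgderiv_pos : ∀ z ∈ Ioo y w, 1 / (2 * Real.sqrt C) ≤ deriv g z := by
    by_contra h
    push_neg at h
    obtain ⟨z₀, hz₀, hz₀lt⟩ := h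
    have hz₀neg : deriv g z₀ < 0 := by
      by_contra h'
      push_neg at h'
      have := habs z₀ hz₀
      rw [abs_of_nonneg h'] at this
      linarith
    have hneg : ∀ z ∈ Ioo y w, deriv g z < 0 := by
      intro z hz
      by_contra h'
      push_neg at h'
      rcases lt_trichotomy z₀ z with hlt | heq | hgt
      · have hsub4 : Icc z₀ z ⊆ Ioo y w := Icc_subset_Ioo hz₀.1 hz.2
        have := intermediate_value_Icc hlt.le (hdgcont.mono hsub4)
        obtain ⟨c, hc, hc0⟩ := this ⟨hz₀neg.le, h'⟩
        have := habs c (hsub4 hc)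
        rw [hc0] at this
        simp only [abs_zero] at this
        have : (0:ℝ) < 1 / (2 * Real.sqrt C) := by positivity
        linarith
      · rw [heq] at hz₀neg; linarith
      · have hsub4 : Icc z z₀ ⊆ Ioo y w := Icc_subset_Ioo hz.1 hz₀.2
        have := intermediate_value_Icc' hgt.le (hdgcont.mono hsub4)
        obtain ⟨c, hc, hc0⟩ := this ⟨hz₀neg.le, h'⟩
        have := habs c (hsub4 hc)
        rw [hc0] at this
        simp only [abs_zero] at this
        have : (0:ℝ) < 1 / (2 * Real.sqrt C) := by positivity
        linarith
    have hanti : StrictAntiOn g (Icc y w) := by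
      apply strictAntiOn_of_deriv_neg (convex_Icc y w)
        (hgcont.mono (Icc_subset_Icc hyS.1 hw.2))
      intro z hz
      rw [interior_Icc] at hz
      exact hneg z hz
    have h5 : g w < g y := hanti ⟨le_rfl, hyltw.le⟩ ⟨hyltw.le, le_rfl⟩ hyltw
    have h6 : g y = 0 := by simp [hgdef, hfy]
    have h7 : 0 ≤ g w := Real.sqrt_nonneg _
    rw [h6] at h5
    linarith
  -- quadratic growth
  have hQG : ∀ x ∈ Ioc y w, (x - y) ^ 2 / (4 * C) ≤ f x - m := by
    intro x hx
    have hxy : 0 < x - y := sub_pos.2 hx.1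
    have hgx : (x - y) / (2 * Real.sqrt C) ≤ g x := by
      obtain ⟨c, hc, hslope⟩ := exists_deriv_eq_slope g hx.1
        (hgcont.mono (Icc_subset_Icc hyS.1 (hx.2.trans hw.2)))
        (fun z hz => (hgderiv z ⟨hz.1, hz.2.trans_le hx.2⟩).differentiableAt.differentiableWithinAt)
      have hc' : c ∈ Ioo y w := ⟨hc.1, hc.2.trans_le hx.2⟩
      have h1 := hgderiv_pos c hc'
      rw [hslope] at h1
      have hgy : g y = 0 := by simp [hgdef, hfy]
      rw [hgy, sub_zero] at h1
      rw [div_le_div_iff₀ (by positivity) (by positivity)] at h1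
      rw [div_le_iff₀ (by positivity)]
      nlinarith
    have hfxm : 0 ≤ f x - m := sub_nonneg.2 (hmle x (hIocS hx))
    have hgx2 : g x ^ 2 = f x - m := Real.sq_sqrt hfxm
    have h1 : ((x - y) / (2 * Real.sqrt C)) ^ 2 ≤ g x ^ 2 :=
      pow_le_pow_left₀ (by positivity) hgx 2
    have h2 : ((x - y) / (2 * Real.sqrt C)) ^ 2 = (x - y) ^ 2 / (4 * C) := by
      rw [div_pow, mul_pow, Real.sq_sqrt hC.le]
      norm_num
    rw [h2, hgx2] at h1
    exact h1
  -- the second derivative at y is ≤ -1/(2C) in absolute value terms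
  set A := derivWithin f' S y with hAdef
  have hA : HasDerivWithinAt f' A (Ioc y w) y := (hf'diff y hyS).mono hIocS
  rw [hasDerivWithinAt_iff_tendsto_slope] at hA
  have hyne : y ∉ Ioc y w := fun h => lt_irrefl y h.1
  rw [diff_singleton_eq_self hyne] at hA
  have hNB : (𝓝[Ioc y w] y).NeBot := by
    rw [nhdsWithin_Ioc_eq_nhdsGT hyltw]
    infer_instance
  have hslope_lb : ∀ z ∈ Ioc y w, 1 / (2 * C) ≤ |slope f' y z| := by
    intro z hz
    have hzy : 0 < z - y := sub_pos.2 hz.1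
    have h1 := hQG z hz
    have h2 := hPL z (hIocS hz)
    have h3 : (z - y) / (2 * C) ≤ |f' z| := by
      have h4 : (z - y) ^ 2 ≤ (2 * C * |f' z|) ^ 2 := by
        have : (2 * C * |f' z|) ^ 2 = 4 * C * (C * (f' z) ^ 2) := by
          rw [mul_pow, mul_pow, sq_abs]; ring
        rw [this]
        rw [div_le_iff₀ (by positivity)] at h1
        nlinarith
      have h5 : z - y ≤ 2 * C * |f' z| := by
        nlinarith [abs_nonneg (f' z), hzy, h4, mul_nonneg (mul_nonneg (by linarith : (0:ℝ) ≤ 2) hC.le) (abs_nonneg (f' z))]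
      rw [div_le_iff₀ (by positivity)]
      nlinarith [h5]
    rw [slope_def_field, hf'y, sub_zero, abs_div, abs_of_pos hzy,
      div_le_div_iff₀ (by positivity) (by positivity)]
    rw [div_le_iff₀ (by positivity)] at h3
    linarith
  have hAabs : 1 / (2 * C) ≤ |A| := by
    have hA' : Tendsto (fun z => |slope f' y z|) (𝓝[Ioc y w] y) (𝓝 |A|) :=
      (continuous_abs.tendsto A).comp hA
    exact ge_of_tendsto hA' (eventually_nhdsWithin_of_forall hslope_lb)
  have hCpos : (0:ℝ) < 1 / (2 * C) := by positivity
  have hAneg : A < 0 := by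
    rcases abs_cases A with ⟨h1, h2⟩ | ⟨h1, h2⟩
    · exfalso
      rw [h1] at hAabs
      linarith
    · exact h2
  have hev : ∀ᶠ z in 𝓝[Ioc y w] y, slope f' y z < 0 := hA.eventually (gt_mem_nhds hAneg)
  rw [nhdsWithin_Ioc_eq_nhdsGT hyltw] at hev
  obtain ⟨b0, hb0, hsub⟩ := mem_nhdsGT_iff_exists_Ioc_subset.1 hev
  set b := min b0 w with hbdef
  have hyb : y < b := lt_min hb0 hyltw
  have hbw : b ≤ w := min_le_right _ _
  have hbS : b ∈ S := ⟨hyS.1.trans hyb.le, hbw.trans hw.2⟩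
  have hf'neg : ∀ z ∈ Ioc y b, f' z < 0 := by
    intro z hz
    have h1 : slope f' y z < 0 := hsub ⟨hz.1, hz.2.trans (min_le_left _ _)⟩
    rw [slope_def_field, hf'y, sub_zero] at h1
    have hzy : 0 < z - y := sub_pos.2 hz.1
    rcases div_neg_iff.1 h1 with ⟨h2, h3⟩ | ⟨h2, h3⟩
    · linarith
    · exact h2
  have hanti2 : StrictAntiOn f (Icc y b) := by
    apply strictAntiOn_of_deriv_neg (convex_Icc y b) (hcf.mono (Icc_subset_Icc hyS.1 hbS.2))
    intro z hz
    rw [interior_Icc] at hz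
    have hzint : z ∈ Ioo l u := ⟨hyS.1.trans_lt hz.1, hz.2.trans_le hbS.2⟩
    have h4 := hf'neg z ⟨hz.1, hz.2.le⟩
    rw [← hderiv_int z hzint]
    exact h4
  have h6 : f b < f y := hanti2 ⟨le_rfl, hyb.le⟩ ⟨hyb.le, le_rfl⟩ hyb
  have h7 : m ≤ f b := hmle b hbS
  rw [hfy] at h6
  linarith

set_option maxHeartbeats 1000000 in
/-- If a non-constant `C²` function `f` on a compact interval `[l,u]` satisfies the PL
condition `f(x) - inf f ≤ C |f'(x)|²` for some constant `C`, then wherever `f'` vanishes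
on `[l,u]`, the second derivative `f''` is strictly positive. -/
theorem statement_3 (l u : ℝ) (f : ℝ → ℝ)
    (hf : ContDiffOn ℝ 2 f (Icc l u))
    (hnc : ∃ x ∈ Icc l u, ∃ y ∈ Icc l u, f x ≠ f y)
    (C : ℝ)
    (hPL : ∀ x ∈ Icc l u,
      f x - sInf (f '' Icc l u) ≤ C * (derivWithin f (Icc l u) x) ^ 2) :
    ∀ x ∈ Icc l u, derivWithin f (Icc l u) x = 0 →
      0 < derivWithin (derivWithin f (Icc l u)) (Icc l u) x := by
  intro x₀ hx₀ hd0
  by_contra hle'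
  push_neg at hle'
  have hbdd : BddBelow (f '' Icc l u) :=
    (isCompact_Icc.image_of_continuousOn hf.continuousOn).bddBelow
  have hmle : ∀ x ∈ Icc l u, sInf (f '' Icc l u) ≤ f x := fun x hx =>
    csInf_le hbdd (mem_image_of_mem f hx)
  obtain ⟨a, ha, b, hb, hab⟩ := hnc
  obtain ⟨w, hwS, hfw⟩ : ∃ w ∈ Icc l u, sInf (f '' Icc l u) < f w := by
    rcases hab.lt_or_gt with h | h
    · exact ⟨b, hb, (hmle a ha).trans_lt h⟩
    · exact ⟨a, ha, (hmle b hb).trans_lt h⟩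
  have hfx₀ : f x₀ ≤ sInf (f '' Icc l u) := by
    have h1 := hPL x₀ hx₀
    rw [hd0] at h1
    nlinarith
  have hwx : w ≠ x₀ := fun h => by rw [h] at hfw; linarith
  rcases hwx.lt_or_gt with hlt | hgt
  · -- w < x₀ : apply the key lemma to the reflected function
    have hlu : l < u := lt_of_le_of_lt hwS.1 (hlt.trans_le hx₀.2)
    have hUD : UniqueDiffOn ℝ (Icc l u) := uniqueDiffOn_Icc hlu
    have hUD' : UniqueDiffOn ℝ (Icc (-u) (-l)) := uniqueDiffOn_Icc (by linarith)
    set F : ℝ → ℝ := fun t => f (-t) with hFdef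
    have hmem : ∀ x : ℝ, x ∈ Icc (-u) (-l) → -x ∈ Icc l u := fun x hx =>
      ⟨by linarith [hx.2], by linarith [hx.1]⟩
    have hmaps : MapsTo Neg.neg (Icc (-u) (-l)) (Icc l u) := fun x hx => hmem x hx
    have hFc : ContDiffOn ℝ 2 F (Icc (-u) (-l)) :=
      hf.comp contDiff_neg.contDiffOn (fun x hx => hmem x hx)
    have himg : F '' Icc (-u) (-l) = f '' Icc l u := by
      calc F '' Icc (-u) (-l) = f '' (Neg.neg '' Icc (-u) (-l)) :=
            Set.image_comp f Neg.neg _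
        _ = f '' Icc l u := by rw [Set.image_neg_Icc]; norm_num
    have hf'at : ∀ z ∈ Icc l u,
        HasDerivWithinAt f (derivWithin f (Icc l u) z) (Icc l u) z := fun z hz =>
      ((hf.differentiableOn (by norm_num)) z hz).hasDerivWithinAt
    have hFd : ∀ x ∈ Icc (-u) (-l),
        HasDerivWithinAt F (-derivWithin f (Icc l u) (-x)) (Icc (-u) (-l)) x := by
      intro x hx
      have h1 := (hf'at (-x) (hmem x hx)).comp x
        ((hasDerivAt_neg x).hasDerivWithinAt) hmaps
      have h2 : derivWithin f (Icc l u) (-x) * (-1) = -derivWithin f (Icc l u) (-x) := by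
        ring
      rw [← h2]
      exact h1
    have hFderiv : ∀ x ∈ Icc (-u) (-l),
        derivWithin F (Icc (-u) (-l)) x = -derivWithin f (Icc l u) (-x) := fun x hx =>
      (hFd x hx).derivWithin (hUD' x hx)
    have hPL' : ∀ x ∈ Icc (-u) (-l),
        F x - sInf (F '' Icc (-u) (-l)) ≤ C * (derivWithin F (Icc (-u) (-l)) x) ^ 2 := by
      intro x hx
      rw [himg, hFderiv x hx, neg_sq]
      exact hPL (-x) (hmem x hx)
    have hx₀' : -x₀ ∈ Icc (-u) (-l) := ⟨by linarith [hx₀.2], by linarith [hx₀.1]⟩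
    have hf'c : ContDiffOn ℝ 1 (derivWithin f (Icc l u)) (Icc l u) :=
      hf.derivWithin hUD (by norm_num)
    have hf'diffat : HasDerivWithinAt (derivWithin f (Icc l u))
        (derivWithin (derivWithin f (Icc l u)) (Icc l u) x₀) (Icc l u) x₀ :=
      ((hf'c.differentiableOn one_ne_zero) x₀ hx₀).hasDerivWithinAt
    have h0 : HasDerivWithinAt (derivWithin f (Icc l u))
        (derivWithin (derivWithin f (Icc l u)) (Icc l u) x₀) (Icc l u) (- -x₀) := by
      rw [neg_neg]; exact hf'diffat
    have h1 := h0.comp (-x₀) ((hasDerivAt_neg (-x₀)).hasDerivWithinAt) hmaps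
    have h2 := h1.neg
    have hG : HasDerivWithinAt (fun x => -derivWithin f (Icc l u) (-x))
        (derivWithin (derivWithin f (Icc l u)) (Icc l u) x₀) (Icc (-u) (-l)) (-x₀) := by
      have h3 : -(derivWithin (derivWithin f (Icc l u)) (Icc l u) x₀ * (-1)) =
          derivWithin (derivWithin f (Icc l u)) (Icc l u) x₀ := by ring
      rw [← h3]
      exact h2
    have hF2 : derivWithin (derivWithin F (Icc (-u) (-l))) (Icc (-u) (-l)) (-x₀) =
        derivWithin (derivWithin f (Icc l u)) (Icc l u) x₀ := by
      have h3 : HasDerivWithinAt (derivWithin F (Icc (-u) (-l)))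
          (derivWithin (derivWithin f (Icc l u)) (Icc l u) x₀) (Icc (-u) (-l)) (-x₀) :=
        hG.congr (fun t ht => hFderiv t ht) (hFderiv _ hx₀')
      exact h3.derivWithin (hUD' _ hx₀')
    have hd0' : derivWithin F (Icc (-u) (-l)) (-x₀) = 0 := by
      rw [hFderiv _ hx₀', neg_neg, hd0, neg_zero]
    have hle'' : derivWithin (derivWithin F (Icc (-u) (-l))) (Icc (-u) (-l)) (-x₀) ≤ 0 := by
      rw [hF2]; exact hle'
    have hw' : -w ∈ Icc (-u) (-l) := ⟨by linarith [hwS.2], by linarith [hwS.1]⟩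
    have hFw : F (-w) = f w := by rw [hFdef]; simp
    have hfw' : sInf (F '' Icc (-u) (-l)) < F (-w) := by
      rw [himg, hFw]; exact hfw
    exact key_aux (-u) (-l) F hFc C hPL' (-x₀) hx₀' hd0' hle'' (-w) hw'
      (by linarith) hfw'
  · exact key_aux l u f hf C hPL x₀ hx₀ hd0 hle' w hwS hgt hfw
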